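/- If all stable matchings are perfect and μ is a stable matching containing an acceptable pair (m,w) with f_m(w) > (k − O_M) + f_m(μ_M(m)), then balance(μ) > k. -/
import Mathlib


open scoped Classical

/-- A Stable Marriage instance: `acc` is the mutual acceptability relation,
`pm m w` is man `m`'s preference value for woman `w` (lower = better),
`pw w m` is woman `w`'s preference value for man `m`. -/
structure SMInst (M W : Type*) where
  acc : M → W → Prop
  pm : M → W → ℕ
  pw : W → M → ℕ

namespace SMInst

variable {M W : Type*} (I : SMInst M W)

/-- A matching, encoded as a relation: matched pairs are acceptable and
each person appears in at most one pair. -/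
def IsMatching (r : M → W → Prop) : Prop :=
  (∀ m w, r m w → I.acc m w) ∧
  (∀ m w w', r m w → r m w' → w = w') ∧
  (∀ m m' w, r m w → r m' w → m = m')

/-- `m` is matched by `r`. -/
def MMatched (r : M → W → Prop) (m : M) : Prop := ∃ w, r m w

/-- `w` is matched by `r`. -/
def WMatched (r : M → W → Prop) (w : W) : Prop := ∃ m, r m w

/-- `(m, w)` blocks `r`: the pair is acceptable, `m` is unmatched or prefers `w`
to his partner, and `w` is unmatched or prefers `m` to her partner. -/
def Blocks (r : M → W → Prop) (m : M) (w : W) : Prop :=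
  I.acc m w ∧
  (∀ w', r m w' → I.pm m w < I.pm m w') ∧
  (∀ m', r m' w → I.pw w m < I.pw w m')

/-- A stable matching: a matching with no blocking pair. -/
def IsStable (r : M → W → Prop) : Prop :=
  I.IsMatching r ∧ ∀ m w, ¬ I.Blocks r m w

/-- Sum of the men's preference values over the pairs of a matching. -/
noncomputable def sumM [Fintype M] [Fintype W] (r : M → W → Prop) : ℕ :=
  ∑ p ∈ Finset.univ.filter (fun p : M × W => r p.1 p.2), I.pm p.1 p.2

/-- Sum of the women's preference values over the pairs of a matching. -/
noncomputable def sumW [Fintype M] [Fintype W] (r : M → W → Prop) : ℕ :=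
  ∑ p ∈ Finset.univ.filter (fun p : M × W => r p.1 p.2), I.pw p.2 p.1

/-- Balance of a matching. -/
noncomputable def bal [Fintype M] [Fintype W] (r : M → W → Prop) : ℕ :=
  max (I.sumM r) (I.sumW r)

/-- Blocking pair for a perfect matching given as an equivalence `M ≃ W`. -/
def BlocksE (e : M ≃ W) (m : M) (w : W) : Prop :=
  I.acc m w ∧ I.pm m w < I.pm m (e m) ∧ I.pw w m < I.pw w (e.symm w)

/-- A stable perfect matching: all matched pairs acceptable, no blocking pair. -/
def IsStableE (e : M ≃ W) : Prop :=
  (∀ m, I.acc m (e m)) ∧ ∀ m w, ¬ I.BlocksE e m w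

/-- Sum of the men's preference values in a perfect matching. -/
def sumME [Fintype M] (e : M ≃ W) : ℕ := ∑ m, I.pm m (e m)

/-- Sum of the women's preference values in a perfect matching. -/
def sumWE [Fintype W] (e : M ≃ W) : ℕ := ∑ w, I.pw w (e.symm w)

/-- Balance of a perfect matching. -/
def balE [Fintype M] [Fintype W] (e : M ≃ W) : ℕ := max (I.sumME e) (I.sumWE e)

end SMInst

/-- If all stable matchings are perfect and the stable matching μ
contains an acceptable pair (m, w) with f_m(w) > (k − O_M) + f_m(μ_M(m)),
then balance(μ) > k. -/
theorem high_value_pair_exceeds_k {M W : Type*} [Fintype M] [Fintype W]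
    (I : SMInst M W) (μ μM : M ≃ W) (k : ℕ)
    (hμ : I.IsStableE μ) (hμM : I.IsStableE μM)
    (hmanOpt : ∀ e : M ≃ W, I.IsStableE e → ∀ m, I.pm m (μM m) ≤ I.pm m (e m))
    (m : M)
    (hgt : (k - I.sumME μM) + I.pm m (μM m) < I.pm m (μ m)) :
    k < I.balE μ := by
  have hsplitM : I.pm m (μM m) + ∑ m' ∈ Finset.univ.erase m, I.pm m' (μM m') = I.sumME μM :=
    Finset.add_sum_erase _ (fun m' => I.pm m' (μM m')) (Finset.mem_univ m)
  have hsplit : I.pm m (μ m) + ∑ m' ∈ Finset.univ.erase m, I.pm m' (μ m') = I.sumME μ :=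
    Finset.add_sum_erase _ (fun m' => I.pm m' (μ m')) (Finset.mem_univ m)
  have hsum : ∑ m' ∈ Finset.univ.erase m, I.pm m' (μM m') ≤
      ∑ m' ∈ Finset.univ.erase m, I.pm m' (μ m') :=
    Finset.sum_le_sum fun m' _ => hmanOpt μ hμ m'
  have hk : k < I.sumME μ := by omega
  exact lt_of_lt_of_le hk (le_max_left _ _)
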